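/- arXiv:2403.00666 — 2 statements merged into one kernel-verified Lean document; each statement's English description precedes it below -/
import Mathlib

section
/- Let (T,ρ_T) and (Z,ρ_Z) be metric spaces and define the metric ρ_T × ρ_Z on T × Z by (ρ_T × ρ_Z)((t₁,z₁),(t₂,z₂)) = ρ_T(t₁,t₂) + ρ_Z(z₁,z₂). Then γ₂(T × Z, ρ_T × ρ_Z) ≤ 3γ₂(T,ρ_T) + 3γ₂(Z,ρ_Z). -/
open MeasureTheory ProbabilityTheory
open scoped ENNReal NNReal RealInnerProductSpace

noncomputable section

/-- `N₀ = 1`, `N_k = 2^(2^k)` for `k ≥ 1`. -/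
def Nk (k : ℕ) : ℕ := if k = 0 then 1 else 2 ^ 2 ^ k

/-- Talagrand's `γ₂` functional of a space `T` with distance function `ρ`. -/
def gamma2 {T : Type*} (ρ : T → T → ℝ) : ℝ≥0∞ :=
  ⨅ A ∈ {A : ℕ → Set T | ∀ k, (A k).Nonempty ∧ (A k).Finite ∧ (A k).ncard ≤ Nk k},
    ⨆ t : T, ∑' k : ℕ, ENNReal.ofReal ((2 : ℝ) ^ ((k : ℝ) / 2) * sInf ((fun s => ρ t s) '' A k))

private lemma Nk_mul_self_le (k : ℕ) : Nk (k - 1) * Nk (k - 1) ≤ Nk k := by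
  match k with
  | 0 => simp [Nk]
  | 1 => simp [Nk]
  | (j + 2) =>
    show Nk (j + 1) * Nk (j + 1) ≤ Nk (j + 2)
    have h1 : Nk (j + 1) = 2 ^ 2 ^ (j + 1) := by simp [Nk]
    have h2 : Nk (j + 2) = 2 ^ 2 ^ (j + 2) := by simp [Nk]
    rw [h1, h2, ← pow_add]
    exact Nat.pow_le_pow_right (by norm_num) (by rw [pow_succ 2 (j + 1), mul_two])

private lemma ncard_prod_eq {α β : Type*} (s : Set α) (t : Set β) :
    (s ×ˢ t).ncard = s.ncard * t.ncard := by
  rw [← Nat.card_coe_set_eq, ← Nat.card_coe_set_eq, ← Nat.card_coe_set_eq,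
    Nat.card_congr (Equiv.Set.prod s t), Nat.card_prod]

private lemma sInf_prod_dist {T Z : Type*} [MetricSpace T] [MetricSpace Z]
    (t : T) (z : Z) {A : Set T} {B : Set Z} (hAne : A.Nonempty) (hAfin : A.Finite)
    (hBne : B.Nonempty) (hBfin : B.Finite) :
    sInf ((fun s : T × Z => dist t s.1 + dist z s.2) '' (A ×ˢ B))
      = sInf ((fun s => dist t s) '' A) + sInf ((fun s => dist z s) '' B) := by
  obtain ⟨a, haA, ha⟩ := Set.Nonempty.csInf_mem (hAne.image (fun s => dist t s))
    (hAfin.image _)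
  obtain ⟨b, hbB, hb⟩ := Set.Nonempty.csInf_mem (hBne.image (fun s => dist z s))
    (hBfin.image _)
  apply le_antisymm
  · rw [← ha, ← hb]
    exact csInf_le ((hAfin.prod hBfin).image _).bddBelow
      ⟨(a, b), Set.mk_mem_prod haA hbB, rfl⟩
  · refine le_csInf ((hAne.prod hBne).image _) ?_
    rintro - ⟨⟨x, y⟩, ⟨hx, hy⟩, rfl⟩
    exact add_le_add (csInf_le (hAfin.image _).bddBelow ⟨x, hx, rfl⟩)
      (csInf_le (hBfin.image _).bddBelow ⟨y, hy, rfl⟩)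

private lemma shift_sum_le (γ : ℕ → ℝ) (_hγ : ∀ k, 0 ≤ γ k) :
    (∑' k : ℕ, ENNReal.ofReal ((2 : ℝ) ^ ((k : ℝ) / 2) * γ (k - 1)))
      ≤ 3 * ∑' k : ℕ, ENNReal.ofReal ((2 : ℝ) ^ ((k : ℝ) / 2) * γ k) := by
  set S := ∑' k : ℕ, ENNReal.ofReal ((2 : ℝ) ^ ((k : ℝ) / 2) * γ k) with hS
  have hhalf : ENNReal.ofReal ((2 : ℝ) ^ ((1 : ℝ) / 2)) ≤ 2 := by
    have h2 : (2 : ℝ) ^ ((1 : ℝ) / 2) ≤ 2 := by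
      calc (2 : ℝ) ^ ((1 : ℝ) / 2) ≤ (2 : ℝ) ^ (1 : ℝ) :=
            Real.rpow_le_rpow_of_exponent_le one_le_two (by norm_num)
        _ = 2 := Real.rpow_one 2
    calc ENNReal.ofReal ((2 : ℝ) ^ ((1 : ℝ) / 2)) ≤ ENNReal.ofReal 2 :=
          ENNReal.ofReal_le_ofReal h2
      _ = 2 := ENNReal.ofReal_ofNat 2
  rw [tsum_eq_zero_add' ENNReal.summable]
  have h0 : ENNReal.ofReal ((2 : ℝ) ^ (((0 : ℕ) : ℝ) / 2) * γ (0 - 1)) ≤ S := by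
    simpa using ENNReal.le_tsum (f := fun k : ℕ =>
      ENNReal.ofReal ((2 : ℝ) ^ ((k : ℝ) / 2) * γ k)) 0
  have h1 : (∑' k : ℕ, ENNReal.ofReal ((2 : ℝ) ^ (((k + 1 : ℕ) : ℝ) / 2) * γ (k + 1 - 1)))
      ≤ 2 * S := by
    rw [hS, ← ENNReal.tsum_mul_left]
    refine ENNReal.tsum_le_tsum fun k => ?_
    have e2 : (2 : ℝ) ^ (((k + 1 : ℕ) : ℝ) / 2)
        = (2 : ℝ) ^ ((1 : ℝ) / 2) * (2 : ℝ) ^ ((k : ℝ) / 2) := by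
      rw [← Real.rpow_add two_pos]
      congr 1
      push_cast
      ring
    calc ENNReal.ofReal ((2 : ℝ) ^ (((k + 1 : ℕ) : ℝ) / 2) * γ (k + 1 - 1))
        = ENNReal.ofReal ((2 : ℝ) ^ ((1 : ℝ) / 2))
            * ENNReal.ofReal ((2 : ℝ) ^ ((k : ℝ) / 2) * γ k) := by
          rw [← ENNReal.ofReal_mul (by positivity)]
          congr 1
          rw [e2]
          simp [mul_assoc]
      _ ≤ 2 * ENNReal.ofReal ((2 : ℝ) ^ ((k : ℝ) / 2) * γ k) :=
          mul_le_mul_left hhalf _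
  calc ENNReal.ofReal ((2 : ℝ) ^ (((0 : ℕ) : ℝ) / 2) * γ (0 - 1))
        + (∑' k : ℕ, ENNReal.ofReal ((2 : ℝ) ^ (((k + 1 : ℕ) : ℝ) / 2) * γ (k + 1 - 1)))
      ≤ S + 2 * S := add_le_add h0 h1
    _ = 3 * S := by ring

private lemma gamma2_key {T Z : Type*} [MetricSpace T] [MetricSpace Z]
    {A : ℕ → Set T} {B : ℕ → Set Z}
    (hA : ∀ k, (A k).Nonempty ∧ (A k).Finite ∧ (A k).ncard ≤ Nk k)
    (hB : ∀ k, (B k).Nonempty ∧ (B k).Finite ∧ (B k).ncard ≤ Nk k) :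
    gamma2 (fun p q : T × Z => dist p.1 q.1 + dist p.2 q.2) ≤
      3 * (⨆ t : T, ∑' k : ℕ, ENNReal.ofReal ((2 : ℝ) ^ ((k : ℝ) / 2) *
            sInf ((fun s => dist t s) '' A k)))
      + 3 * (⨆ z : Z, ∑' k : ℕ, ENNReal.ofReal ((2 : ℝ) ^ ((k : ℝ) / 2) *
            sInf ((fun s => dist z s) '' B k))) := by
  set C : ℕ → Set (T × Z) := fun k => A (k - 1) ×ˢ B (k - 1) with hCdef
  have hC : C ∈ {C : ℕ → Set (T × Z) |
      ∀ k, (C k).Nonempty ∧ (C k).Finite ∧ (C k).ncard ≤ Nk k} := by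
    intro k
    refine ⟨(hA _).1.prod (hB _).1, (hA _).2.1.prod (hB _).2.1, ?_⟩
    rw [hCdef]
    rw [ncard_prod_eq]
    exact le_trans (Nat.mul_le_mul (hA _).2.2 (hB _).2.2) (Nk_mul_self_le k)
  refine le_trans (iInf₂_le C hC) (iSup_le ?_)
  rintro ⟨t, z⟩
  have hα0 : ∀ k, (0 : ℝ) ≤ sInf ((fun s => dist t s) '' A k) := fun k =>
    Real.sInf_nonneg (by rintro x ⟨s, -, rfl⟩; exact dist_nonneg)
  have hβ0 : ∀ k, (0 : ℝ) ≤ sInf ((fun s => dist z s) '' B k) := fun k =>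
    Real.sInf_nonneg (by rintro x ⟨s, -, rfl⟩; exact dist_nonneg)
  have hterm : ∀ k : ℕ, ENNReal.ofReal ((2 : ℝ) ^ ((k : ℝ) / 2) *
        sInf ((fun s => dist (t, z).1 s.1 + dist (t, z).2 s.2) '' C k))
      = ENNReal.ofReal ((2 : ℝ) ^ ((k : ℝ) / 2) * sInf ((fun s => dist t s) '' A (k - 1)))
        + ENNReal.ofReal ((2 : ℝ) ^ ((k : ℝ) / 2) * sInf ((fun s => dist z s) '' B (k - 1))) := by
    intro k
    have : sInf ((fun s : T × Z => dist t s.1 + dist z s.2) '' C k)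
        = sInf ((fun s => dist t s) '' A (k - 1)) + sInf ((fun s => dist z s) '' B (k - 1)) :=
      sInf_prod_dist t z (hA _).1 (hA _).2.1 (hB _).1 (hB _).2.1
    rw [show (fun s : T × Z => dist (t, z).1 s.1 + dist (t, z).2 s.2)
        = fun s : T × Z => dist t s.1 + dist z s.2 from rfl, this, mul_add,
      ENNReal.ofReal_add (mul_nonneg (by positivity) (hα0 _))
        (mul_nonneg (by positivity) (hβ0 _))]
  calc (∑' k : ℕ, ENNReal.ofReal ((2 : ℝ) ^ ((k : ℝ) / 2) *
          sInf ((fun s => dist (t, z).1 s.1 + dist (t, z).2 s.2) '' C k)))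
      = (∑' k : ℕ, (ENNReal.ofReal ((2 : ℝ) ^ ((k : ℝ) / 2) *
            sInf ((fun s => dist t s) '' A (k - 1)))
          + ENNReal.ofReal ((2 : ℝ) ^ ((k : ℝ) / 2) *
            sInf ((fun s => dist z s) '' B (k - 1))))) := tsum_congr hterm
    _ = (∑' k : ℕ, ENNReal.ofReal ((2 : ℝ) ^ ((k : ℝ) / 2) *
            sInf ((fun s => dist t s) '' A (k - 1))))
        + ∑' k : ℕ, ENNReal.ofReal ((2 : ℝ) ^ ((k : ℝ) / 2) *
            sInf ((fun s => dist z s) '' B (k - 1))) := ENNReal.tsum_add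
    _ ≤ 3 * (∑' k : ℕ, ENNReal.ofReal ((2 : ℝ) ^ ((k : ℝ) / 2) *
            sInf ((fun s => dist t s) '' A k)))
        + 3 * ∑' k : ℕ, ENNReal.ofReal ((2 : ℝ) ^ ((k : ℝ) / 2) *
            sInf ((fun s => dist z s) '' B k)) :=
        add_le_add (shift_sum_le _ hα0) (shift_sum_le _ hβ0)
    _ ≤ _ := add_le_add (mul_le_mul_right (le_iSup _ t) (3 : ℝ≥0∞)) (mul_le_mul_right (le_iSup _ z) (3 : ℝ≥0∞))

/-- Subadditivity (up to a factor 3) of Talagrand's `γ₂` functional under the sum metric on a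
product of two metric spaces (Lemma 2.1 of the paper). -/
theorem gamma2_prod_le {T Z : Type*} [MetricSpace T] [MetricSpace Z] :
    gamma2 (fun p q : T × Z => dist p.1 q.1 + dist p.2 q.2)
      ≤ 3 * gamma2 (fun a b : T => dist a b) + 3 * gamma2 (fun a b : Z => dist a b) := by
  conv_rhs => rw [gamma2, gamma2]
  simp_rw [ENNReal.mul_iInf_of_ne (a := (3 : ℝ≥0∞)) (by norm_num) (by norm_num), ENNReal.iInf_add,
    ENNReal.add_iInf]
  exact le_iInf fun A => le_iInf fun hA => le_iInf fun B => le_iInf fun hB =>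
    gamma2_key hA hB

end
end

section
/- Let a > 0 and s ∈ ℕ, and let D be the set of all functions h : [−a,a]^s → ℝ that are 1-Lipschitz (with respect to the Euclidean norm on ℝ^s) and satisfy h(0) = 0, equipped with the supremum norm ‖h‖_∞ = sup_{x∈[−a,a]^s} |h(x)|. Then for every ε > 0, the covering number satisfies N(D, ‖·‖_∞, ε) ≤ exp((C a √s / ε)^s), where C ≥ 1 is a universal constant. -/
open MeasureTheory ProbabilityTheory
open scoped ENNReal NNReal RealInnerProductSpace

noncomputable section

/-- The covering number of a space `T` with distance function `ρ` at scale `ε`,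
as an extended nonnegative real. -/
def coverN {T : Type*} (ρ : T → T → ℝ) (ε : ℝ) : ℝ≥0∞ :=
  ⨅ S ∈ {S : Set T | S.Finite ∧ ∀ t, ∃ s ∈ S, ρ t s ≤ ε}, (S.ncard : ℝ≥0∞)

/-- The cube `[-a,a]^s` in `ℝ^s`. -/
def cube (s : ℕ) (a : ℝ) : Set (EuclideanSpace ℝ (Fin s)) := {x | ∀ i, |x i| ≤ a}

namespace CoverAux

variable (s : ℕ) (a ε : ℝ)

abbrev Dom := {h : cube s a → ℝ //
  LipschitzWith 1 h ∧ ∀ h0 : (0 : EuclideanSpace ℝ (Fin s)) ∈ cube s a, h ⟨0, h0⟩ = 0}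

/-- mesh size -/
def η : ℝ := ε / (3 * Real.sqrt s)

def pt (k : Fin s → ℤ) : EuclideanSpace ℝ (Fin s) :=
  WithLp.toLp 2 (fun i => min (max ((k i : ℝ) * η s ε) (-a)) a)

lemma pt_mem (ha : 0 < a) (k : Fin s → ℤ) : pt s a ε k ∈ cube s a := by
  intro i
  rw [abs_le]
  constructor
  · exact le_min (le_max_right _ _) (by linarith)
  · exact min_le_right _ _

def vfun (ha : 0 < a) (h : Dom s a) (k : Fin s → ℤ) : ℤ :=
  ⌊ h.1 ⟨pt s a ε k, pt_mem s a ε ha k⟩ / (ε / 3) ⌋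

def step (k : Fin s → ℤ) (i : Fin s) : Fin s → ℤ :=
  Function.update k i (k i - (k i).sign)

def m : ℕ := ⌈3 * a * Real.sqrt s / ε⌉₊ + 1

def Bfin : Finset (Fin s → ℤ) := Fintype.piFinset fun _ => Finset.Icc (-(m s a ε : ℤ)) (m s a ε)

def key (x : EuclideanSpace ℝ (Fin s)) : Fin s → ℤ := fun i => ⌊x i / η s ε⌋

abbrev Code := ({k // k ∈ Bfin s a ε} × Fin s) → {z : ℤ // z ∈ Finset.Icc (-2 : ℤ) 2}

def encode (ha : 0 < a) (h : Dom s a) : Code s a ε :=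
  fun p => ⟨max (-2) (min 2 (vfun s a ε ha h p.1.1 - vfun s a ε ha h (step s p.1.1 p.2))),
    by rw [Finset.mem_Icc]; constructor
       · exact le_max_left _ _
       · exact max_le (by norm_num) (min_le_left _ _)⟩

def zeroD : Dom s a :=
  ⟨fun _ => 0, LipschitzWith.const' 0, fun _ => rfl⟩

open Classical in
def pick (ha : 0 < a) (c : Code s a ε) : Dom s a :=
  if hc : ∃ g, encode s a ε ha g = c then hc.choose else zeroD s a

lemma encode_pick (ha : 0 < a) (h : Dom s a) :
    encode s a ε ha (pick s a ε ha (encode s a ε ha h)) = encode s a ε ha h := by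
  rw [pick, dif_pos ⟨h, rfl⟩]
  exact (⟨h, rfl⟩ : ∃ g, encode s a ε ha g = encode s a ε ha h).choose_spec


lemma one_le_sqrt (hs : 1 ≤ s) : 1 ≤ Real.sqrt s := by
  rw [show (1:ℝ) = Real.sqrt 1 by simp]
  exact Real.sqrt_le_sqrt (by exact_mod_cast hs)

lemma eta_pos (hs : 1 ≤ s) (hε : 0 < ε) : 0 < η s ε := by
  have := one_le_sqrt s hs
  exact div_pos hε (by linarith)

lemma euclid_dist_le {n : ℕ} (x y : EuclideanSpace ℝ (Fin n)) (c : ℝ) (hc : 0 ≤ c)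
    (h : ∀ i, |x i - y i| ≤ c) : dist x y ≤ c * Real.sqrt n := by
  rw [EuclideanSpace.dist_eq]
  have h1 : ∑ i, dist (x i) (y i) ^ 2 ≤ ∑ _i : Fin n, c ^ 2 := by
    apply Finset.sum_le_sum
    intro i _
    rw [Real.dist_eq]
    exact pow_le_pow_left₀ (abs_nonneg _) (h i) 2
  calc Real.sqrt (∑ i, dist (x i) (y i) ^ 2) ≤ Real.sqrt (∑ _i : Fin n, c ^ 2) :=
        Real.sqrt_le_sqrt h1
    _ = c * Real.sqrt n := by
        rw [Finset.sum_const, Finset.card_univ, Fintype.card_fin, nsmul_eq_mul,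
          Real.sqrt_mul (by positivity), Real.sqrt_sq hc, mul_comm]

lemma floor_diff_le {p q : ℝ} (h : |p - q| ≤ 1) : |⌊p⌋ - ⌊q⌋| ≤ 2 := by
  rw [abs_le] at h ⊢
  have h1 := Int.floor_le p
  have h2 := Int.floor_le q
  have h3 := Int.lt_floor_add_one p
  have h4 := Int.lt_floor_add_one q
  constructor
  · have : (⌊q⌋ : ℝ) - ⌊p⌋ ≤ 2 := by push_cast; linarith
    have := (by exact_mod_cast this : (⌊q⌋ : ℤ) - ⌊p⌋ ≤ 2)
    omega
  · have : (⌊p⌋ : ℝ) - ⌊q⌋ ≤ 2 := by push_cast; linarith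
    exact_mod_cast this


lemma a_div_eta (hs : 1 ≤ s) (hε : 0 < ε) : a / η s ε = 3 * a * Real.sqrt s / ε := by
  have h1 := one_le_sqrt s hs
  rw [η, div_div_eq_mul_div]
  ring

lemma key_mem_Bfin (hs : 1 ≤ s) (ha : 0 < a) (hε : 0 < ε) {x : EuclideanSpace ℝ (Fin s)}
    (hx : x ∈ cube s a) : key s ε x ∈ Bfin s a ε := by
  have hη := eta_pos s ε hs hε
  rw [Bfin, Fintype.mem_piFinset]
  intro i
  rw [Finset.mem_Icc]
  have hb : |x i / η s ε| ≤ (m s a ε : ℝ) := by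
    rw [abs_div, abs_of_pos hη]
    have h1 : |x i| / η s ε ≤ a / η s ε := by
      gcongr
      exact hx i
    refine h1.trans ?_
    rw [a_div_eta s a ε hs hε, m]
    push_cast
    have := Nat.le_ceil (3 * a * Real.sqrt s / ε)
    linarith
  rw [abs_le] at hb
  constructor
  · have : (-(m s a ε) : ℤ) = ⌊(-(m s a ε) : ℝ)⌋ := by
      rw [← Int.floor_intCast (R := ℝ) (-(m s a ε) : ℤ)]; norm_num
    rw [key, this]
    exact Int.floor_le_floor hb.1
  · have : (m s a ε : ℤ) = ⌊((m s a ε) : ℝ)⌋ := by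
      rw [← Int.floor_intCast (R := ℝ) ((m s a ε) : ℤ)]; norm_num
    rw [key, this]
    exact Int.floor_le_floor hb.2

lemma pt_key_close (hs : 1 ≤ s) (ha : 0 < a) (hε : 0 < ε) {x : EuclideanSpace ℝ (Fin s)}
    (hx : x ∈ cube s a) (i : Fin s) : |x i - pt s a ε (key s ε x) i| ≤ η s ε := by
  have hη := eta_pos s ε hs hε
  have hc1 : (⌊x i / η s ε⌋ : ℝ) * η s ε ≤ x i := by
    have h := mul_le_mul_of_nonneg_right (Int.floor_le (x i / η s ε)) hη.le
    rwa [div_mul_cancel₀ _ hη.ne'] at h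
  have hc2 : x i < (⌊x i / η s ε⌋ : ℝ) * η s ε + η s ε := by
    have := Int.lt_floor_add_one (x i / η s ε)
    rw [div_lt_iff₀ hη] at this
    calc x i < ((⌊x i / η s ε⌋ : ℝ) + 1) * η s ε := this
      _ = (⌊x i / η s ε⌋ : ℝ) * η s ε + η s ε := by ring
  have hxi := hx i
  rw [abs_le] at hxi
  set c : ℝ := (⌊x i / η s ε⌋ : ℝ) * η s ε with hc
  simp only [pt, PiLp.toLp_apply, key]
  rcases le_or_gt (-a) c with h | h
  · rw [max_eq_left h, min_eq_left (by linarith)]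
    rw [abs_le]; constructor <;> linarith
  · rw [max_eq_right h.le, min_eq_left (by linarith)]
    rw [abs_le]; constructor <;> linarith

lemma sqrt_mul_eta (hs : 1 ≤ s) (hε : 0 < ε) : η s ε * Real.sqrt s = ε / 3 := by
  have h1 := one_le_sqrt s hs
  rw [η]
  field_simp

lemma dist_pt_key (hs : 1 ≤ s) (ha : 0 < a) (hε : 0 < ε) {x : EuclideanSpace ℝ (Fin s)}
    (hx : x ∈ cube s a) : dist x (pt s a ε (key s ε x)) ≤ ε / 3 := by
  rw [← sqrt_mul_eta s ε hs hε]
  exact euclid_dist_le _ _ _ (eta_pos s ε hs hε).le (pt_key_close s a ε hs ha hε hx)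

lemma sign_cases (z : ℤ) : z.sign = -1 ∨ z.sign = 0 ∨ z.sign = 1 := by
  rcases z with (_ | n) | n
  · right; left; rfl
  · right; right; rfl
  · left; rfl

lemma natAbs_sub_sign_le (z : ℤ) : (z - z.sign).natAbs ≤ z.natAbs := by
  rcases z with (_ | n) | n <;> simp [Int.sign, Int.negSucc_eq] <;> omega

lemma natAbs_sub_sign_eq (z : ℤ) (hz : z ≠ 0) : (z - z.sign).natAbs = z.natAbs - 1 := by
  rcases z with (_ | n) | n <;> simp [Int.sign, Int.negSucc_eq] <;> omega

lemma clamp_lip (u v : ℝ) : |min (max u (-a)) a - min (max v (-a)) a| ≤ |u - v| := by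
  calc |min (max u (-a)) a - min (max v (-a)) a|
      ≤ max |max u (-a) - max v (-a)| |a - a| := abs_min_sub_min_le_max _ _ _ _
    _ ≤ |u - v| := max_le (abs_max_sub_max_le_abs _ _ _) (by simp [abs_nonneg])

lemma pt_step_close (hs : 1 ≤ s) (hε : 0 < ε) (k : Fin s → ℤ) (i j : Fin s) :
    |pt s a ε k j - pt s a ε (step s k i) j| ≤ η s ε := by
  have hη := eta_pos s ε hs hε
  rcases eq_or_ne j i with rfl | hj
  · rw [pt, pt, PiLp.toLp_apply, PiLp.toLp_apply, step, Function.update_self]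
    refine le_trans (clamp_lip a _ _) ?_
    have hsgn : |((k j).sign : ℝ)| ≤ 1 := by
      rcases sign_cases (k j) with h | h | h <;> rw [h] <;> norm_num
    calc |(k j : ℝ) * η s ε - ((k j - (k j).sign : ℤ) : ℝ) * η s ε|
        = |((k j).sign : ℝ)| * η s ε := by
          push_cast
          rw [show (k j : ℝ) * η s ε - ((k j : ℝ) - ((k j).sign : ℝ)) * η s ε
              = ((k j).sign : ℝ) * η s ε by ring, abs_mul, abs_of_pos hη]
      _ ≤ 1 * η s ε := by gcongr
      _ = η s ε := one_mul _
  · rw [pt, pt, PiLp.toLp_apply, PiLp.toLp_apply, step, Function.update_of_ne hj]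
    simp [hη.le]

lemma dist_pt_step (hs : 1 ≤ s) (hε : 0 < ε) (k : Fin s → ℤ) (i : Fin s) :
    dist (pt s a ε k) (pt s a ε (step s k i)) ≤ ε / 3 := by
  rw [← sqrt_mul_eta s ε hs hε]
  exact euclid_dist_le _ _ _ (eta_pos s ε hs hε).le (pt_step_close s a ε hs hε k i)


lemma lip_bound (h : Dom s a) (x y : ↥(cube s a)) : |h.1 x - h.1 y| ≤ dist x.1 y.1 := by
  have := h.2.1.dist_le_mul x y
  rw [Subtype.dist_eq, Real.dist_eq] at this
  simpa using this

lemma vfun_step_close (hs : 1 ≤ s) (ha : 0 < a) (hε : 0 < ε) (h : Dom s a) (k : Fin s → ℤ)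
    (i : Fin s) : |vfun s a ε ha h k - vfun s a ε ha h (step s k i)| ≤ 2 := by
  have hd := dist_pt_step s a ε hs hε k i
  have h1 : |h.1 ⟨pt s a ε k, pt_mem s a ε ha k⟩
      - h.1 ⟨pt s a ε (step s k i), pt_mem s a ε ha (step s k i)⟩| ≤ ε / 3 :=
    le_trans (lip_bound s a h _ _) hd
  apply floor_diff_le
  rw [div_sub_div_same, abs_div, abs_of_pos (by linarith : (0:ℝ) < ε / 3),
    div_le_one (by linarith)]
  exact h1

def weight (k : Fin s → ℤ) : ℕ := ∑ i, (k i).natAbs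

lemma step_update (k : Fin s → ℤ) (i : Fin s) :
    (fun j => ((step s k i) j).natAbs)
      = Function.update (fun j => (k j).natAbs) i ((k i - (k i).sign).natAbs) := by
  funext j
  rcases eq_or_ne j i with rfl | hj
  · simp [step]
  · simp [step, Function.update_of_ne hj]

lemma weight_step_lt (k : Fin s → ℤ) (i : Fin s) (hi : k i ≠ 0) :
    weight s (step s k i) < weight s k := by
  have h1 : weight s (step s k i)
      = (k i - (k i).sign).natAbs + ∑ j ∈ Finset.univ \ {i}, (k j).natAbs := by
    rw [weight, show (fun j => ((step s k i) j).natAbs) = _ from step_update s k i]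
    exact Finset.sum_update_of_mem (Finset.mem_univ i) _ _
  have h2 : weight s k = (k i).natAbs + ∑ j ∈ Finset.univ \ {i}, (k j).natAbs := by
    rw [weight, ← Finset.add_sum_erase _ _ (Finset.mem_univ i), Finset.erase_eq]
  have h3 := natAbs_sub_sign_eq (k i) hi
  have h4 : 1 ≤ (k i).natAbs := Int.natAbs_pos.mpr hi
  omega

lemma step_mem_Bfin (k : Fin s → ℤ) (i : Fin s) (hk : k ∈ Bfin s a ε) :
    step s k i ∈ Bfin s a ε := by
  rw [Bfin, Fintype.mem_piFinset] at hk ⊢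
  intro j
  rcases eq_or_ne j i with rfl | hj
  · have := hk j
    rw [Finset.mem_Icc] at this ⊢
    have h1 := natAbs_sub_sign_le (k j)
    rw [step, Function.update_self]
    omega
  · rw [step, Function.update_of_ne hj]
    exact hk j

lemma vfun_eq_of_incr_eq (hs : 1 ≤ s) (ha : 0 < a) (hε : 0 < ε) (h h' : Dom s a)
    (H : ∀ k ∈ Bfin s a ε, ∀ i : Fin s,
      vfun s a ε ha h k - vfun s a ε ha h (step s k i)
        = vfun s a ε ha h' k - vfun s a ε ha h' (step s k i)) :
    ∀ (n : ℕ) (k : Fin s → ℤ), k ∈ Bfin s a ε → weight s k = n →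
      vfun s a ε ha h k = vfun s a ε ha h' k := by
  intro n
  induction n using Nat.strong_induction_on with
  | _ n IH =>
    intro k hk hw
    rcases eq_or_ne k 0 with rfl | hk0
    · have h0mem : (0 : EuclideanSpace ℝ (Fin s)) ∈ cube s a := by
        intro i
        simp [ha.le]
      have hpt : pt s a ε (0 : Fin s → ℤ) = (0 : EuclideanSpace ℝ (Fin s)) := by
        ext i
        simp only [pt, PiLp.toLp_apply, Pi.zero_apply, Int.cast_zero, zero_mul]
        rw [max_eq_left (by linarith), min_eq_left (by linarith)]
        rfl
      have e1 : h.1 ⟨pt s a ε 0, pt_mem s a ε ha 0⟩ = 0 := by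
        rw [show (⟨pt s a ε 0, pt_mem s a ε ha 0⟩ : ↥(cube s a)) = ⟨0, h0mem⟩
          from Subtype.ext hpt]
        exact h.2.2 h0mem
      have e2 : h'.1 ⟨pt s a ε 0, pt_mem s a ε ha 0⟩ = 0 := by
        rw [show (⟨pt s a ε 0, pt_mem s a ε ha 0⟩ : ↥(cube s a)) = ⟨0, h0mem⟩
          from Subtype.ext hpt]
        exact h'.2.2 h0mem
      rw [vfun, vfun, e1, e2]
    · have hex : ∃ i, k i ≠ 0 := by
        by_contra hcon
        push_neg at hcon
        exact hk0 (funext fun i => hcon i)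
      obtain ⟨i, hi⟩ := hex
      have hmem := step_mem_Bfin s a ε k i hk
      have hlt : weight s (step s k i) < n := hw ▸ weight_step_lt s k i hi
      have hIH := IH _ hlt (step s k i) hmem rfl
      have hH := H k hk i
      omega

lemma cover_of_encode_eq (hs : 1 ≤ s) (ha : 0 < a) (hε : 0 < ε) (h h' : Dom s a)
    (He : encode s a ε ha h = encode s a ε ha h') (x : ↥(cube s a)) :
    |h.1 x - h'.1 x| ≤ ε := by
  have H : ∀ k ∈ Bfin s a ε, ∀ i : Fin s,
      vfun s a ε ha h k - vfun s a ε ha h (step s k i)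
        = vfun s a ε ha h' k - vfun s a ε ha h' (step s k i) := by
    intro k hk i
    have hc := congrFun He ⟨⟨k, hk⟩, i⟩
    rw [encode, encode, Subtype.ext_iff] at hc
    simp only at hc
    have hb := vfun_step_close s a ε hs ha hε h k i
    have hb' := vfun_step_close s a ε hs ha hε h' k i
    rw [abs_le] at hb hb'
    rwa [min_eq_right hb.2, max_eq_right hb.1, min_eq_right hb'.2, max_eq_right hb'.1] at hc
  have hkmem := key_mem_Bfin s a ε hs ha hε x.2
  have hveq := vfun_eq_of_incr_eq s a ε hs ha hε h h' H (weight s (key s ε x.1))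
    (key s ε x.1) hkmem rfl
  set p : ↥(cube s a) := ⟨pt s a ε (key s ε x.1), pt_mem s a ε ha _⟩ with hp
  have h1 : |h.1 x - h.1 p| ≤ ε / 3 :=
    le_trans (lip_bound s a h x p) (dist_pt_key s a ε hs ha hε x.2)
  have h2 : |h'.1 p - h'.1 x| ≤ ε / 3 := by
    rw [abs_sub_comm]
    exact le_trans (lip_bound s a h' x p) (dist_pt_key s a ε hs ha hε x.2)
  have h3 : |h.1 p - h'.1 p| ≤ ε / 3 := by
    have hδ : (0:ℝ) < ε / 3 := by linarith
    have hu1 : (vfun s a ε ha h (key s ε x.1) : ℝ) ≤ h.1 p / (ε/3) :=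
      Int.floor_le _
    have hu2 : h.1 p / (ε/3) < (vfun s a ε ha h (key s ε x.1) : ℝ) + 1 :=
      Int.lt_floor_add_one _
    have hw1 : (vfun s a ε ha h' (key s ε x.1) : ℝ) ≤ h'.1 p / (ε/3) :=
      Int.floor_le _
    have hw2 : h'.1 p / (ε/3) < (vfun s a ε ha h' (key s ε x.1) : ℝ) + 1 :=
      Int.lt_floor_add_one _
    rw [hveq] at hu1 hu2
    have : |h.1 p / (ε/3) - h'.1 p / (ε/3)| ≤ 1 := by
      rw [abs_le]
      constructor <;> linarith
    rw [div_sub_div_same, abs_div, abs_of_pos hδ, div_le_one hδ] at this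
    linarith [this]
  calc |h.1 x - h'.1 x|
      = |(h.1 x - h.1 p) + (h.1 p - h'.1 p) + (h'.1 p - h'.1 x)| := by ring_nf
    _ ≤ |h.1 x - h.1 p| + |h.1 p - h'.1 p| + |h'.1 p - h'.1 x| := abs_add_three _ _ _
    _ ≤ ε / 3 + ε / 3 + ε / 3 := by gcongr
    _ = ε := by ring


lemma card_code : Fintype.card (Code s a ε) = 5 ^ ((2 * m s a ε + 1) ^ s * s) := by
  have h1 : Fintype.card ({k // k ∈ Bfin s a ε} × Fin s) = (2 * m s a ε + 1) ^ s * s := by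
    rw [Fintype.card_prod, Fintype.card_coe, Fintype.card_fin, Bfin, Fintype.card_piFinset]
    congr 1
    have : (Finset.Icc (-(m s a ε : ℤ)) (m s a ε)).card = 2 * m s a ε + 1 := by
      rw [Int.card_Icc]
      omega
    rw [Finset.prod_congr rfl fun i _ => this, Finset.prod_const, Finset.card_univ,
      Fintype.card_fin]
  rw [Fintype.card_fun, h1]
  norm_num [Fintype.card_coe, Int.card_Icc]
  rfl

lemma numeric (hs : 1 ≤ s) (ha : 0 < a) (hε : 0 < ε) (hlt : ε < a * Real.sqrt s) :
    ((5 : ℝ)) ^ ((2 * m s a ε + 1) ^ s * s) ≤ Real.exp ((44 * a * Real.sqrt s / ε) ^ s) := by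
  set t : ℝ := a * Real.sqrt s / ε with htdef
  have ht1 : 1 ≤ t := by
    rw [htdef, le_div_iff₀ hε, one_mul]
    exact hlt.le
  have ht0 : 0 < t := lt_of_lt_of_le one_pos ht1
  have hlog : Real.log 5 ≤ 2 := by
    rw [Real.log_le_iff_le_exp (by norm_num)]
    have h9 := Real.exp_one_gt_d9
    have he2 : Real.exp 2 = Real.exp 1 * Real.exp 1 := by
      rw [← Real.exp_add]; norm_num
    nlinarith
  have hm : (m s a ε : ℝ) ≤ 3 * t + 2 := by
    rw [m]
    push_cast
    have h3t : 3 * a * Real.sqrt s / ε = 3 * t := by rw [htdef]; ring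
    have := Nat.ceil_lt_add_one (by positivity : (0:ℝ) ≤ 3 * a * Real.sqrt s / ε)
    linarith
  have h2m : ((2 * m s a ε + 1 : ℕ) : ℝ) ≤ 11 * t := by
    push_cast
    linarith
  have hpow : ((2 * m s a ε + 1 : ℕ) : ℝ) ^ s ≤ (11 * t) ^ s :=
    pow_le_pow_left₀ (by positivity) h2m s
  have hs4 : (s : ℝ) * 2 ≤ 4 ^ s := by
    have := one_add_mul_le_pow (by norm_num : (-2:ℝ) ≤ 3) s
    have hs1 : (1 : ℝ) ≤ s := by exact_mod_cast hs
    calc (s : ℝ) * 2 ≤ 1 + s * 3 := by linarith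
      _ ≤ (1 + 3) ^ s := this
      _ = 4 ^ s := by norm_num
  have hX : (44 * a * Real.sqrt s / ε) ^ s = (11 * t) ^ s * 4 ^ s := by
    rw [← mul_pow]
    congr 1
    rw [htdef]
    ring
  have hmain : (((2 * m s a ε + 1) ^ s * s : ℕ) : ℝ) * Real.log 5
      ≤ (44 * a * Real.sqrt s / ε) ^ s := by
    rw [Nat.cast_mul, Nat.cast_pow, hX]
    have hlognn : 0 ≤ Real.log 5 := Real.log_nonneg (by norm_num)
    calc ((2 * m s a ε + 1 : ℕ) : ℝ) ^ s * s * Real.log 5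
        ≤ (11 * t) ^ s * ((s : ℝ) * 2) := by
          rw [mul_assoc]
          exact mul_le_mul hpow (by nlinarith [Nat.cast_nonneg (α := ℝ) s])
            (by positivity) (by positivity)
      _ ≤ (11 * t) ^ s * 4 ^ s := by
          have h11 : (0:ℝ) ≤ (11 * t) ^ s := by positivity
          exact mul_le_mul_of_nonneg_left hs4 h11
  calc (5 : ℝ) ^ ((2 * m s a ε + 1) ^ s * s)
      = Real.exp ((((2 * m s a ε + 1) ^ s * s : ℕ) : ℝ) * Real.log 5) := by
        rw [Real.exp_nat_mul, Real.exp_log (by norm_num)]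
    _ ≤ Real.exp ((44 * a * Real.sqrt s / ε) ^ s) := Real.exp_le_exp.mpr hmain

end CoverAux

/-- Covering numbers, in the supremum norm, of the set of 1-Lipschitz functions vanishing at
the origin on the cube `[-a,a]^s` (Lemma 2.3 of the paper). -/
theorem covering_lipschitz_cube :
    ∃ C : ℝ, 1 ≤ C ∧
      ∀ (s : ℕ) (a : ℝ), 0 < a → ∀ ε : ℝ, 0 < ε →
        coverN
          (fun h₁ h₂ : {h : cube s a → ℝ //
              LipschitzWith 1 h ∧
                ∀ h0 : (0 : EuclideanSpace ℝ (Fin s)) ∈ cube s a, h ⟨0, h0⟩ = 0} =>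
            ⨆ x : cube s a, |h₁.1 x - h₂.1 x|) ε
          ≤ ENNReal.ofReal (Real.exp ((C * a * Real.sqrt s / ε) ^ s)) := by
  refine ⟨44, by norm_num, ?_⟩
  intro s a ha ε hε
  have h0mem : (0 : EuclideanSpace ℝ (Fin s)) ∈ cube s a := by
    intro i
    simp [ha.le]
  haveI : Nonempty ↥(cube s a) := ⟨⟨0, h0mem⟩⟩
  have hXnn : (0:ℝ) ≤ (44 * a * Real.sqrt s / ε) ^ s := by positivity
  rcases le_or_gt (a * Real.sqrt s) ε with hle | hlt
  · -- trivial net consisting of the zero function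
    have hScov : ({CoverAux.zeroD s a} : Set (CoverAux.Dom s a)) ∈
        {S : Set (CoverAux.Dom s a) | S.Finite ∧
          ∀ t : CoverAux.Dom s a, ∃ g ∈ S, (⨆ x : cube s a, |t.1 x - g.1 x|) ≤ ε} := by
      refine ⟨Set.finite_singleton _, ?_⟩
      intro h
      refine ⟨_, Set.mem_singleton _, ?_⟩
      apply ciSup_le
      intro x
      have hz : (CoverAux.zeroD s a).1 x = h.1 ⟨0, h0mem⟩ := (h.2.2 h0mem).symm
      rw [hz]
      refine le_trans (CoverAux.lip_bound s a h x ⟨0, h0mem⟩) ?_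
      have := CoverAux.euclid_dist_le (x : EuclideanSpace ℝ (Fin s)) 0 a ha.le
        (fun i => by simpa using x.2 i)
      exact le_trans this hle
    refine le_trans (iInf₂_le _ hScov) ?_
    · rw [Set.ncard_singleton]
      rw [show ((1:ℕ) : ℝ≥0∞) = ENNReal.ofReal ((1:ℕ):ℝ) from (ENNReal.ofReal_natCast 1).symm]
      exact ENNReal.ofReal_le_ofReal (by simpa using Real.one_le_exp hXnn)
  · -- main case
    have hs : 1 ≤ s := by
      rcases Nat.eq_zero_or_pos s with rfl | h
      · simp at hlt
        linarith
      · exact h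
    have hScov : (Set.range (CoverAux.pick s a ε ha)) ∈
        {S : Set (CoverAux.Dom s a) | S.Finite ∧
          ∀ t : CoverAux.Dom s a, ∃ g ∈ S, (⨆ x : cube s a, |t.1 x - g.1 x|) ≤ ε} := by
      refine ⟨Set.finite_range _, ?_⟩
      intro h
      refine ⟨CoverAux.pick s a ε ha (CoverAux.encode s a ε ha h), Set.mem_range_self _, ?_⟩
      apply ciSup_le
      intro x
      have He := CoverAux.encode_pick s a ε ha h
      have := CoverAux.cover_of_encode_eq s a ε hs ha hε _ h He x
      rwa [abs_sub_comm] at this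
    refine le_trans (iInf₂_le _ hScov) ?_
    · have hn : (Set.range (CoverAux.pick s a ε ha)).ncard
          ≤ 5 ^ ((2 * CoverAux.m s a ε + 1) ^ s * s) := by
        rw [← Nat.card_coe_set_eq]
        refine le_trans (Finite.card_range_le _) ?_
        rw [Nat.card_eq_fintype_card, CoverAux.card_code]
      refine le_trans (Nat.cast_le.mpr hn) ?_
      rw [← ENNReal.ofReal_natCast]
      apply ENNReal.ofReal_le_ofReal
      push_cast
      exact CoverAux.numeric s a ε hs ha hε hlt

end
end
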